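/- With α_t = (H+1)/(H+t) and α_t^i = α_i ∏_{j=i+1}^t (1 - α_j) (where α_t^i = α_i if t < i), for every integer i ≥ 1, Σ_{t=i}^∞ α_t^i = 1 + 1/H. -/

import Mathlib

open Real Finset Filter Topology

/-- Learning rate `α_t = (H+1)/(H+t)`. -/
noncomputable def lr (H t : ℕ) : ℝ := (H + 1) / (H + t)

/-- Weight `α_t^i = α_i ∏_{j=i+1}^t (1 - α_j)` (equal to `α_i` when `t < i + 1`). -/
noncomputable def lrWeight (H i t : ℕ) : ℝ :=
  lr H i * ∏ j ∈ Finset.Icc (i + 1) t, (1 - lr H j)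

lemma one_sub_lr (H j : ℕ) (hj : 1 ≤ j) :
    1 - lr H j = ((j : ℝ) - 1) / (H + j) := by
  have h : (0:ℝ) < (H:ℝ) + j := by positivity
  rw [lr]
  field_simp
  ring

lemma lr_nonneg (H t : ℕ) : 0 ≤ lr H t := by
  unfold lr; positivity

lemma one_sub_lr_nonneg (H j : ℕ) (hj : 1 ≤ j) : 0 ≤ 1 - lr H j := by
  rw [one_sub_lr H j hj]
  have : (1:ℝ) ≤ (j:ℝ) := by exact_mod_cast hj
  have h : (0:ℝ) < (H:ℝ) + j := by positivity
  apply div_nonneg <;> linarith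

theorem lrWeight_tsum (H : ℕ) (hH : 1 ≤ H) (i : ℕ) (hi : 1 ≤ i) :
    ∑' t : ℕ, (if i ≤ t then lrWeight H i t else 0) = 1 + 1 / (H : ℝ) := by
  set f : ℕ → ℝ := fun t => if i ≤ t then lrWeight H i t else 0 with hf
  set P : ℕ → ℝ := fun N => ∏ j ∈ Finset.Icc (i + 1) N, (1 - lr H j) with hP
  have hHpos : (0:ℝ) < H := by exact_mod_cast hH
  have hipos : (0:ℝ) < i := by exact_mod_cast hi
  -- nonnegativity
  have hfnn : ∀ t, 0 ≤ f t := by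
    intro t
    simp only [hf]
    split
    · apply mul_nonneg (lr_nonneg H i)
      apply Finset.prod_nonneg
      intro j hj
      exact one_sub_lr_nonneg H j (le_trans (le_trans hi (Nat.le_succ i)) (Finset.mem_Icc.mp hj).1)
    · exact le_refl 0
  -- product recurrence
  have hPrec : ∀ N, i ≤ N → P (N + 1) = P N * ((N : ℝ) / (H + N + 1)) := by
    intro N hN
    have h1 : i + 1 ≤ N + 1 := by omega
    rw [hP]
    simp only
    rw [Finset.prod_Icc_succ_top h1, one_sub_lr H (N+1) (by omega)]
    push_cast
    ring_nf
  -- partial sum formula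
  have hsum : ∀ N, i ≤ N → ∑ t ∈ range (N + 1), f t
      = (H + 1) / (H + i) * (1 + i / H - (N : ℝ) / H * P N) := by
    intro N hN
    induction N, hN using Nat.le_induction with
    | base =>
      rw [Finset.sum_range_succ]
      have h0 : ∑ t ∈ range i, f t = 0 := by
        apply Finset.sum_eq_zero
        intro t ht
        have htl := Finset.mem_range.mp ht
        simp only [hf]
        rw [if_neg (by omega)]
      have hPi : P i = 1 := by
        rw [hP]; simp [Finset.Icc_eq_empty_of_lt (Nat.lt_succ_self i)]
      rw [h0, hPi]
      simp only [hf, if_pos le_rfl, lrWeight, lr]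
      rw [show Finset.Icc (i+1) i = ∅ from Finset.Icc_eq_empty (by omega), Finset.prod_empty]
      have h1 : (H:ℝ) + i ≠ 0 := by positivity
      field_simp
      try ring
    | succ N hN ih =>
      rw [Finset.sum_range_succ, ih]
      have hfN : f (N + 1) = lr H i * P (N + 1) := by
        simp only [hf, if_pos (by omega : i ≤ N + 1), lrWeight, ← hP]
        rfl
      rw [hfN, hPrec N hN, lr]
      have h1 : (H:ℝ) + i ≠ 0 := by positivity
      have h2 : (H:ℝ) + N + 1 ≠ 0 := by positivity
      have h3 : (H:ℝ) ≠ 0 := ne_of_gt hHpos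
      push_cast
      field_simp
      ring
  -- bound : P N ≤ i(i+1)/(N(N+1))
  have hPbound : ∀ N, i ≤ N → P N ≤ (i:ℝ) * (i+1) / (N * (N+1)) := by
    intro N hN
    induction N, hN using Nat.le_induction with
    | base =>
      have hPi : P i = 1 := by
        rw [hP]; simp [Finset.Icc_eq_empty_of_lt (Nat.lt_succ_self i)]
      rw [hPi, div_self (by positivity)]
    | succ N hN ih =>
      have hNpos : (0:ℝ) < N := lt_of_lt_of_le hipos (by exact_mod_cast hN)
      rw [hPrec N hN]
      have hfac : (N:ℝ) / (H + N + 1) ≤ (N:ℝ) / (N + 2) := by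
        apply div_le_div_of_nonneg_left (le_of_lt hNpos) (by linarith)
        have : (1:ℝ) ≤ H := by exact_mod_cast hH
        linarith
      have hfacnn : (0:ℝ) ≤ (N:ℝ) / (H + N + 1) := by positivity
      have hPnn : 0 ≤ P N := by
        apply Finset.prod_nonneg
        intro j hj
        have := (Finset.mem_Icc.mp hj).1
        exact one_sub_lr_nonneg H j (by omega)
      calc P N * ((N:ℝ) / (H + N + 1))
          ≤ ((i:ℝ) * (i+1) / (N * (N+1))) * ((N:ℝ) / (N + 2)) := by
            apply mul_le_mul ih hfac hfacnn
            positivity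
        _ = (i:ℝ) * ((i:ℝ) + 1) / ((((N:ℕ)+1 : ℕ) : ℝ) * ((((N:ℕ)+1 : ℕ) : ℝ) + 1)) := by
            push_cast
            field_simp
            ring
  -- tail tends to zero
  have hP0 : Tendsto (fun N : ℕ => (N : ℝ) / H * P N) atTop (𝓝 0) := by
    have hub : Tendsto (fun N : ℕ => (i:ℝ) * (i+1) / H * (1 / ((N:ℝ) + 1))) atTop (𝓝 0) := by
      have := tendsto_one_div_add_atTop_nhds_zero_nat.const_mul ((i:ℝ) * (i+1) / H)
      simpa using this
    apply squeeze_zero' ?_ ?_ hub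
    · filter_upwards [eventually_ge_atTop i] with N hN
      have hPnn : 0 ≤ P N := by
        apply Finset.prod_nonneg
        intro j hj
        have := (Finset.mem_Icc.mp hj).1
        exact one_sub_lr_nonneg H j (by omega)
      positivity
    · filter_upwards [eventually_ge_atTop i] with N hN
      have hNpos : (0:ℝ) < N := lt_of_lt_of_le hipos (by exact_mod_cast hN)
      calc (N : ℝ) / H * P N ≤ (N : ℝ) / H * ((i:ℝ) * (i+1) / (N * (N+1))) := by
            apply mul_le_mul_of_nonneg_left (hPbound N hN) (by positivity)
        _ = (i:ℝ) * (i+1) / H * (1 / ((N:ℝ) + 1)) := by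
            field_simp
  -- conclude
  have hlim : Tendsto (fun N : ℕ => ∑ t ∈ range N, f t) atTop (𝓝 (1 + 1 / (H:ℝ))) := by
    rw [← tendsto_add_atTop_iff_nat 1]
    have hval : (H + 1) / ((H:ℝ) + i) * (1 + (i:ℝ) / H - 0) = 1 + 1 / (H:ℝ) := by
      have h1 : (H:ℝ) + i ≠ 0 := by positivity
      have h3 : (H:ℝ) ≠ 0 := ne_of_gt hHpos
      field_simp
      try ring
    have htends : Tendsto (fun N : ℕ => ((H:ℝ) + 1) / ((H:ℝ) + i) * (1 + (i:ℝ)/H - (N:ℝ)/H * P N)) atTop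
        (𝓝 (((H:ℝ) + 1) / ((H:ℝ) + i) * (1 + (i:ℝ)/H - 0))) :=
      (tendsto_const_nhds.sub hP0).const_mul _
    rw [hval] at htends
    apply htends.congr'
    filter_upwards [eventually_ge_atTop i] with N hN
    exact (hsum N hN).symm
  have : HasSum f (1 + 1 / (H:ℝ)) :=
    (hasSum_iff_tendsto_nat_of_nonneg hfnn _).mpr hlim
  exact this.tsum_eq
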